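/- Let G be a non-degenerate CDS instance. There exists a prime p and a CDS scheme for G over F_p with parameters (L, L_Z, N) such that L ≥ 1 and N = L (i.e., achieving the communication rate R = L/(2N) = 1/2) if and only if within every qualified component of G, no unqualified path contains an internal qualified edge. -/

import Mathlib

/-- A CDS instance is a graph with qualified edges `Q` and unqualified edges `U`.
The half-rate feasibility condition: within every qualified component, no unqualified
path (walk with distinct edges, all of whose vertices lie in one qualified component)
contains an internal qualified edge (a qualified edge joining two vertices of the path). -/
def NoInternalQualifiedEdge {V : Type*} (Q U : SimpleGraph V) : Prop :=
  ∀ ⦃v u : V⦄ (w : U.Walk v u), w.IsTrail →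
    (∀ x ∈ w.support, Q.connectedComponentMk x = Q.connectedComponentMk v) →
    ∀ x ∈ w.support, ∀ y ∈ w.support, ¬ Q.Adj x y

/-- Correctness of a CDS scheme `φ` (signals are deterministic functions of the secret
`s : Fin L → ZMod p` and the noise `z : Fin LZ → ZMod p`): for every qualified edge
`{v,u}`, the secret is determined by the pair of signals. -/
def CDSCorrect {V : Type*} (Q : SimpleGraph V) {p L LZ N : ℕ}
    (φ : V → (Fin L → ZMod p) → (Fin LZ → ZMod p) → (Fin N → ZMod p)) : Prop :=
  ∀ v u : V, Q.Adj v u →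
    ∃ g : (Fin N → ZMod p) → (Fin N → ZMod p) → (Fin L → ZMod p),
      ∀ s z, g (φ v s z) (φ u s z) = s

/-- Security of a CDS scheme `φ`: for every unqualified edge `{v,u}`, the pair of signals
is statistically independent of the secret; since the secret and noise are uniform and
independent, this says the number of noise values producing any given pair of signals
does not depend on the secret. -/
def CDSSecure {V : Type*} (U : SimpleGraph V) {p L LZ N : ℕ}
    (φ : V → (Fin L → ZMod p) → (Fin LZ → ZMod p) → (Fin N → ZMod p)) : Prop :=
  ∀ v u : V, U.Adj v u → ∀ (s₁ s₂ : Fin L → ZMod p) (a b : Fin N → ZMod p),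
    Nat.card {z : Fin LZ → ZMod p // φ v s₁ z = a ∧ φ u s₁ z = b} =
    Nat.card {z : Fin LZ → ZMod p // φ v s₂ z = a ∧ φ u s₂ z = b}

open Finset

section Aux

lemma nat_card_subtype_filter {α : Type*} [Fintype α] (pred : α → Prop) [DecidablePred pred] :
    Nat.card {x // pred x} = (univ.filter pred).card := by
  rw [Nat.card_eq_fintype_card, Fintype.card_subtype]

variable {V : Type*} {p L LZ : ℕ} [NeZero p]
variable {Q U : SimpleGraph V}
variable (φ : V → (Fin L → ZMod p) → (Fin LZ → ZMod p) → (Fin L → ZMod p))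

/-- Summing the security condition over the second signal: the distribution of a single
signal of a vertex incident to an unqualified edge does not depend on the secret. -/
lemma marginal_count (hsec : CDSSecure U φ) {v u : V} (h : U.Adj v u)
    (s₁ s₂ a : Fin L → ZMod p) :
    Nat.card {z : Fin LZ → ZMod p // φ v s₁ z = a} =
    Nat.card {z : Fin LZ → ZMod p // φ v s₂ z = a} := by
  classical
  have key : ∀ s : Fin L → ZMod p,
      (univ.filter fun z : Fin LZ → ZMod p => φ v s z = a).card
        = ∑ b : Fin L → ZMod p,
            (univ.filter fun z : Fin LZ → ZMod p => φ v s z = a ∧ φ u s z = b).card := by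
    intro s
    rw [Finset.card_eq_sum_card_fiberwise (f := fun z => φ u s z) (t := univ)
      (fun x _ => mem_univ _)]
    refine Finset.sum_congr rfl fun b _ => ?_
    rw [Finset.filter_filter]
  rw [nat_card_subtype_filter, nat_card_subtype_filter, key s₁, key s₂]
  refine Finset.sum_congr rfl fun b _ => ?_
  have := hsec v u h s₁ s₂ a b
  rwa [nat_card_subtype_filter, nat_card_subtype_filter] at this

/-- A signal value is attainable for one secret iff it is attainable for any other. -/
lemma exists_noise_of_exists_noise (hsec : CDSSecure U φ) {v u : V} (h : U.Adj v u)
    (s₁ s₂ a : Fin L → ZMod p) (hz : ∃ z, φ v s₁ z = a) : ∃ z, φ v s₂ z = a := by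
  classical
  have hcard := marginal_count φ hsec h s₁ s₂ a
  rw [Nat.card_eq_fintype_card, Nat.card_eq_fintype_card] at hcard
  obtain ⟨z, hzz⟩ := hz
  have hpos : 0 < Fintype.card {z // φ v s₁ z = a} := Fintype.card_pos_iff.2 ⟨⟨z, hzz⟩⟩
  rw [hcard] at hpos
  obtain ⟨⟨z', hz'⟩⟩ := Fintype.card_pos_iff.1 hpos
  exact ⟨z', hz'⟩

/-- On a qualified edge, for each fixed secret, the signal of one endpoint determines the
signal of the other endpoint. -/
lemma edge_det (hcor : CDSCorrect Q φ) (hsec : CDSSecure U φ)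
    (hnd : ∀ v : V, ∃ u : V, U.Adj v u)
    {x y : V} (hxy : Q.Adj x y) (s : Fin L → ZMod p) (z₁ z₂ : Fin LZ → ZMod p)
    (hx : φ x s z₁ = φ x s z₂) : φ y s z₁ = φ y s z₂ := by
  classical
  obtain ⟨u, hu⟩ := hnd x
  obtain ⟨g, hg⟩ := hcor x y hxy
  let F := (Fin L → ZMod p)
  have hA : True := trivial
  set A : (Fin L → ZMod p) → Finset ((Fin L → ZMod p) × (Fin L → ZMod p)) :=
    fun s' => univ.image (fun z : Fin LZ → ZMod p => (φ x s' z, φ y s' z)) with hAdef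
  set R : (Fin L → ZMod p) → Finset (Fin L → ZMod p) :=
    fun s' => univ.image (fun z : Fin LZ → ZMod p => φ x s' z) with hRdef
  have hR : ∀ s₁ s₂, R s₁ = R s₂ := by
    intro s₁ s₂
    ext a
    simp only [R, mem_image, mem_univ, true_and]
    exact ⟨fun hz => exists_noise_of_exists_noise φ hsec hu s₁ s₂ a hz,
      fun hz => exists_noise_of_exists_noise φ hsec hu s₂ s₁ a hz⟩
  have hfst : ∀ s', (A s').image Prod.fst = R s' := by
    intro s'
    rw [hAdef, hRdef]
    simp only [Finset.image_image]
    rfl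
  have hdisjA : ∀ s₁ ∈ (univ : Finset (Fin L → ZMod p)), ∀ s₂ ∈ (univ : Finset (Fin L → ZMod p)), s₁ ≠ s₂ →
      Disjoint (A s₁) (A s₂) := by
    intro s₁ _ s₂ _ hne
    rw [Finset.disjoint_left]
    rintro ab hab1 hab2
    simp only [A, mem_image, mem_univ, true_and] at hab1 hab2
    obtain ⟨w₁, hw₁⟩ := hab1
    obtain ⟨w₂, hw₂⟩ := hab2
    apply hne
    calc s₁ = g ab.1 ab.2 := by rw [← hw₁]; exact (hg s₁ w₁).symm
      _ = s₂ := by rw [← hw₂]; exact hg s₂ w₂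
  have hlb : ∀ s' ∈ (univ : Finset (Fin L → ZMod p)), (R s).card ≤ (A s').card := by
    intro s' _
    calc (R s).card = (R s').card := by rw [hR s s']
      _ = ((A s').image Prod.fst).card := by rw [hfst]
      _ ≤ (A s').card := Finset.card_image_le
  have hub : ∑ s' : (Fin L → ZMod p), (A s').card ≤ (R s).card * Fintype.card (Fin L → ZMod p) := by
    rw [← Finset.card_biUnion hdisjA]
    have hsub : univ.biUnion A ⊆ (R s) ×ˢ (univ : Finset (Fin L → ZMod p)) := by
      intro ab hab
      simp only [mem_biUnion] at hab
      obtain ⟨s', _, hab⟩ := hab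
      rw [Finset.mem_product]
      refine ⟨?_, mem_univ _⟩
      have : ab.1 ∈ (A s').image Prod.fst := Finset.mem_image_of_mem Prod.fst hab
      rw [hfst, hR s' s] at this
      exact this
    calc (univ.biUnion A).card ≤ ((R s) ×ˢ (univ : Finset (Fin L → ZMod p))).card := Finset.card_le_card hsub
      _ = (R s).card * Fintype.card (Fin L → ZMod p) := by rw [Finset.card_product, Finset.card_univ]
  have hsum_eq : ∑ _s' : (Fin L → ZMod p), (R s).card = ∑ s' : (Fin L → ZMod p), (A s').card := by
    apply le_antisymm
    · exact Finset.sum_le_sum hlb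
    · calc ∑ s' : (Fin L → ZMod p), (A s').card ≤ (R s).card * Fintype.card (Fin L → ZMod p) := hub
        _ = ∑ _s' : (Fin L → ZMod p), (R s).card := by
            rw [Finset.sum_const, smul_eq_mul, Finset.card_univ, mul_comm]
  have hcards : (A s).card = (R s).card :=
    ((Finset.sum_eq_sum_iff_of_le hlb).1 hsum_eq s (mem_univ s)).symm
  have hinj : Set.InjOn Prod.fst (A s : Set ((Fin L → ZMod p) × (Fin L → ZMod p))) :=
    by apply Finset.injOn_of_card_image_eq; rw [hfst, hcards]
  have h1 : (φ x s z₁, φ y s z₁) ∈ A s := Finset.mem_image_of_mem _ (mem_univ z₁)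
  have h2 : (φ x s z₂, φ y s z₂) ∈ A s := Finset.mem_image_of_mem _ (mem_univ z₂)
  have := hinj (Finset.mem_coe.2 h1) (Finset.mem_coe.2 h2) hx
  exact congrArg Prod.snd this

/-- Determinism propagates along qualified paths. -/
lemma reach_det (hcor : CDSCorrect Q φ) (hsec : CDSSecure U φ)
    (hnd : ∀ v : V, ∃ u : V, U.Adj v u)
    {x w : V} (hr : Q.Reachable x w) (s : Fin L → ZMod p) (z₁ z₂ : Fin LZ → ZMod p)
    (hx : φ x s z₁ = φ x s z₂) : φ w s z₁ = φ w s z₂ := by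
  obtain ⟨wk⟩ := hr
  induction wk with
  | nil => exact hx
  | cons h q ih => exact ih (edge_det φ hcor hsec hnd h s z₁ z₂ hx)


/-- Across an unqualified edge inside a qualified component, the signal map does not
depend on the secret. -/
lemma ustep_det (hcor : CDSCorrect Q φ) (hsec : CDSSecure U φ)
    (hnd : ∀ v : V, ∃ u : V, U.Adj v u)
    {w w' : V} (hU : U.Adj w w') (hr : Q.Reachable w w')
    (s₁ s₂ : Fin L → ZMod p) (z₁ z₂ : Fin LZ → ZMod p)
    (h : φ w s₁ z₁ = φ w s₂ z₂) : φ w' s₁ z₁ = φ w' s₂ z₂ := by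
  classical
  have hcount := hsec w w' hU s₁ s₂ (φ w s₁ z₁) (φ w' s₁ z₁)
  have hpos : 0 < Nat.card {z // φ w s₁ z = φ w s₁ z₁ ∧ φ w' s₁ z = φ w' s₁ z₁} := by
    rw [Nat.card_eq_fintype_card]
    exact Fintype.card_pos_iff.2 ⟨⟨z₁, rfl, rfl⟩⟩
  rw [hcount, Nat.card_eq_fintype_card] at hpos
  obtain ⟨⟨z, hz1, hz2⟩⟩ := Fintype.card_pos_iff.1 hpos
  have hzz : φ w s₂ z = φ w s₂ z₂ := by rw [hz1, h]
  have h2 := reach_det φ hcor hsec hnd hr s₂ z z₂ hzz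
  rw [← hz2, h2]

/-- Along an unqualified walk inside a qualified component, the end signal is a function
of the start signal alone (not of the secret). -/
lemma walk_det (hcor : CDSCorrect Q φ) (hsec : CDSSecure U φ)
    (hnd : ∀ v : V, ∃ u : V, U.Adj v u) (v0 : V) {a b : V} (ω : U.Walk a b) :
    (∀ t ∈ ω.support, Q.connectedComponentMk t = Q.connectedComponentMk v0) →
    ∀ (s₁ s₂ : Fin L → ZMod p) (z₁ z₂ : Fin LZ → ZMod p),
      φ a s₁ z₁ = φ a s₂ z₂ → φ b s₁ z₁ = φ b s₂ z₂ := by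
  induction ω with
  | nil => exact fun _ _ _ _ _ h => h
  | @cons a c b h q ih =>
    intro hsupp s₁ s₂ z₁ z₂ hh
    have hmemc : c ∈ (SimpleGraph.Walk.cons h q).support := by
      rw [SimpleGraph.Walk.support_cons]
      exact List.mem_cons_of_mem _ q.start_mem_support
    have hac : Q.connectedComponentMk a = Q.connectedComponentMk c := by
      rw [hsupp a (SimpleGraph.Walk.start_mem_support _), hsupp c hmemc]
    have hr : Q.Reachable a c := SimpleGraph.ConnectedComponent.exact hac
    have hstep := ustep_det φ hcor hsec hnd h hr s₁ s₂ z₁ z₂ hh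
    have hsupp' : ∀ t ∈ q.support, Q.connectedComponentMk t = Q.connectedComponentMk v0 := by
      intro t ht
      refine hsupp t ?_
      rw [SimpleGraph.Walk.support_cons]
      exact List.mem_cons_of_mem _ ht
    exact ih hsupp' s₁ s₂ z₁ z₂ hstep

end Aux


/-- For a non-degenerate CDS instance `(Q, U)`, there exist a prime `p` and a
CDS scheme over `F_p` with parameters `(L, L_Z, N)`, `L ≥ 1` and `N = L` (rate `1/2`),
if and only if within every qualified component no unqualified path contains an internal
qualified edge. -/
theorem cds_half_rate_iff {V : Type*} [Fintype V] (Q U : SimpleGraph V)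
    (hdisj : ∀ v u : V, ¬ (Q.Adj v u ∧ U.Adj v u))
    (hnd : ∀ v : V, ∃ u : V, U.Adj v u) :
    (∃ p L LZ : ℕ, p.Prime ∧ 1 ≤ L ∧
      ∃ φ : V → (Fin L → ZMod p) → (Fin LZ → ZMod p) → (Fin L → ZMod p),
        CDSCorrect Q φ ∧ CDSSecure U φ) ↔
      NoInternalQualifiedEdge Q U := by
  constructor
  · -- forward direction
    rintro ⟨p, L, LZ, hp, hL, φ, hcor, hsec⟩
    haveI : NeZero p := ⟨hp.ne_zero⟩
    haveI : Fact (1 < p) := ⟨hp.one_lt⟩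
    intro v u w _htrail hcomp x hx y hy hQxy
    -- build a U-walk from x to y with support in the component of v
    classical
    set ω : U.Walk x y := (w.takeUntil x hx).reverse.append (w.takeUntil y hy) with hω
    have hωsupp : ∀ t ∈ ω.support, Q.connectedComponentMk t = Q.connectedComponentMk x := by
      intro t ht
      have htv : t ∈ w.support := by
        rw [hω, SimpleGraph.Walk.mem_support_append_iff] at ht
        rcases ht with ht | ht
        · rw [SimpleGraph.Walk.support_reverse, List.mem_reverse] at ht
          exact w.support_takeUntil_subset hx ht
        · exact w.support_takeUntil_subset hy ht
      rw [hcomp t htv, hcomp x (w.support_takeUntil_subset hx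
        ((w.takeUntil x hx).end_mem_support))]
    -- distinct secrets
    set s₁ : Fin L → ZMod p := fun _ => 0 with hs₁
    set s₂ : Fin L → ZMod p := fun _ => 1 with hs₂
    have hs : s₁ ≠ s₂ := by
      intro hss
      have h01 : (0 : ZMod p) = 1 := congrFun hss ⟨0, hL⟩
      exact zero_ne_one h01
    set z₁ : Fin LZ → ZMod p := fun _ => 0 with hz₁
    obtain ⟨ux, hux⟩ := hnd x
    obtain ⟨z₂, hz₂⟩ := exists_noise_of_exists_noise φ hsec hux s₁ s₂ (φ x s₁ z₁) ⟨z₁, rfl⟩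
    have hyeq : φ y s₁ z₁ = φ y s₂ z₂ :=
      walk_det φ hcor hsec hnd x ω hωsupp s₁ s₂ z₁ z₂ hz₂.symm
    obtain ⟨g, hg⟩ := hcor x y hQxy
    apply hs
    calc s₁ = g (φ x s₁ z₁) (φ y s₁ z₁) := (hg s₁ z₁).symm
      _ = g (φ x s₂ z₂) (φ y s₂ z₂) := by rw [hz₂, hyeq]
      _ = s₂ := hg s₂ z₂
  · -- backward direction: construct a scheme
    intro hNIQE
    classical
    -- the graph of unqualified edges inside a common qualified component
    set H : SimpleGraph V :=
      { Adj := fun a b => U.Adj a b ∧ Q.connectedComponentMk a = Q.connectedComponentMk b,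
        symm := ⟨fun a b hab => ⟨hab.1.symm, hab.2.symm⟩⟩,
        loopless := ⟨fun a ha => U.loopless.irrefl a ha.1⟩ } with hH
    have hHsupp : ∀ {a b : V} (ω : H.Walk a b), ∀ t ∈ ω.support,
        Q.connectedComponentMk t = Q.connectedComponentMk a := by
      intro a b ω
      induction ω with
      | nil =>
        intro t ht
        rw [SimpleGraph.Walk.support_nil, List.mem_singleton] at ht
        rw [ht]
      | @cons a c b h q ih =>
        intro t ht
        rw [SimpleGraph.Walk.support_cons, List.mem_cons] at ht
        rcases ht with ht | ht
        · rw [ht]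
        · rw [ih t ht, ← h.2]
    haveI : Finite H.ConnectedComponent :=
      Finite.of_surjective H.connectedComponentMk
        (fun c => c.exists_rep)
    haveI : Finite Q.ConnectedComponent :=
      Finite.of_surjective Q.connectedComponentMk
        (fun c => c.exists_rep)
    obtain ⟨k, ⟨eH⟩⟩ := Finite.exists_equiv_fin H.ConnectedComponent
    obtain ⟨m, ⟨eQ⟩⟩ := Finite.exists_equiv_fin Q.ConnectedComponent
    obtain ⟨p, hpk, hp⟩ := Nat.exists_infinite_primes (k + 1)
    haveI : Fact p.Prime := ⟨hp⟩
    haveI : NeZero p := ⟨hp.ne_zero⟩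
    set c : V → ZMod p := fun v => (((eH (H.connectedComponentMk v)) : Fin k) : ℕ) with hc
    -- key properties of the coloring
    have key2 : ∀ v u : V, U.Adj v u →
        Q.connectedComponentMk v = Q.connectedComponentMk u → c v = c u := by
      intro v u hU hQc
      have : H.connectedComponentMk v = H.connectedComponentMk u :=
        SimpleGraph.ConnectedComponent.sound (SimpleGraph.Adj.reachable ⟨hU, hQc⟩)
      rw [hc]
      simp only
      rw [this]
    have key1 : ∀ v u : V, Q.Adj v u → c v ≠ c u := by
      intro v u hQ hcc
      -- cast injectivity: the two H-components coincide
      have hvp : ((eH (H.connectedComponentMk v) : Fin k) : ℕ) < p :=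
        lt_of_lt_of_le (eH (H.connectedComponentMk v)).isLt (by omega)
      have hup : ((eH (H.connectedComponentMk u) : Fin k) : ℕ) < p :=
        lt_of_lt_of_le (eH (H.connectedComponentMk u)).isLt (by omega)
      have hval : ((eH (H.connectedComponentMk v) : Fin k) : ℕ)
          = ((eH (H.connectedComponentMk u) : Fin k) : ℕ) := by
        have := congrArg ZMod.val hcc
        rwa [ZMod.val_cast_of_lt hvp, ZMod.val_cast_of_lt hup] at this
      have hcomp : H.connectedComponentMk v = H.connectedComponentMk u :=
        eH.injective (Fin.ext hval)
      -- extract an H-walk from v to u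
      obtain ⟨ω⟩ := SimpleGraph.ConnectedComponent.exact hcomp
      -- transfer to a U-walk with the same support
      have hedges : ∀ e ∈ ω.edges, e ∈ U.edgeSet := by
        intro e he
        have := ω.edges_subset_edgeSet he
        induction e with
        | h a b => exact this.1
      set ωU : U.Walk v u := ω.transfer U hedges with hωU
      have hsuppU : ωU.support = ω.support := SimpleGraph.Walk.support_transfer ω hedges
      -- take the underlying path (a trail)
      set P : U.Path v u := ωU.toPath with hP
      have hPsub : ∀ t ∈ (P : U.Walk v u).support, t ∈ ω.support := by
        intro t ht
        rw [← hsuppU]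
        exact ωU.support_toPath_subset ht
      have hPcomp : ∀ t ∈ (P : U.Walk v u).support,
          Q.connectedComponentMk t = Q.connectedComponentMk v := by
        intro t ht
        exact hHsupp ω t (hPsub t ht)
      exact hNIQE (P : U.Walk v u) P.2.isTrail hPcomp v
        (SimpleGraph.Walk.start_mem_support _) u (SimpleGraph.Walk.end_mem_support _) hQ
    -- the scheme
    refine ⟨p, 1, m, hp, le_refl 1, fun v s z => fun _ =>
      c v * s 0 + z (eQ (Q.connectedComponentMk v)), ?_, ?_⟩
    · -- correctness
      intro v u hQ
      have hcc : Q.connectedComponentMk v = Q.connectedComponentMk u :=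
        SimpleGraph.ConnectedComponent.sound hQ.reachable
      have hcvu : c v - c u ≠ 0 := sub_ne_zero.2 (key1 v u hQ)
      refine ⟨fun A B => fun _ => (c v - c u)⁻¹ * (A 0 - B 0), ?_⟩
      intro s z
      funext i
      have hi : i = 0 := Subsingleton.elim i 0
      subst hi
      simp only [hcc]
      field_simp
      ring
    · -- security
      intro v u hU s₁ s₂ a b
      set j₁ : Fin m := eQ (Q.connectedComponentMk v) with hj₁
      set j₂ : Fin m := eQ (Q.connectedComponentMk u) with hj₂
      set d : Fin m → ZMod p := fun j =>
        if j = j₁ then c v * (s₁ 0 - s₂ 0) else if j = j₂ then c u * (s₁ 0 - s₂ 0) else 0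
        with hd
      have hdj₁ : d j₁ = c v * (s₁ 0 - s₂ 0) := by rw [hd]; simp
      have hdj₂ : d j₂ = c u * (s₁ 0 - s₂ 0) := by
        rw [hd]
        by_cases hj : j₂ = j₁
        · have hcompvu : Q.connectedComponentMk v = Q.connectedComponentMk u :=
            (eQ.injective (hj₁ ▸ hj₂ ▸ hj)).symm
          have := key2 v u hU hcompvu
          simp [hj, this]
        · simp [hj]
      have hv : ∀ z : Fin m → ZMod p,
          c v * s₂ 0 + (z + d) j₁ = c v * s₁ 0 + z j₁ := by
        intro z
        rw [Pi.add_apply, hdj₁]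
        ring
      have hu : ∀ z : Fin m → ZMod p,
          c u * s₂ 0 + (z + d) j₂ = c u * s₁ 0 + z j₂ := by
        intro z
        rw [Pi.add_apply, hdj₂]
        ring
      refine Nat.card_congr (Equiv.subtypeEquiv (Equiv.addRight d) ?_)
      intro z
      have e1 : (fun _ : Fin 1 => c v * s₂ 0 + (z + d) j₁) = (fun _ : Fin 1 => c v * s₁ 0 + z j₁) := by
        funext _; exact hv z
      have e2 : (fun _ : Fin 1 => c u * s₂ 0 + (z + d) j₂) = (fun _ : Fin 1 => c u * s₁ 0 + z j₂) := by
        funext _; exact hu z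
      simp only [Equiv.coe_addRight]
      rw [e1, e2]
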